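/- If a non-autonomous system (X, f_{1,∞}) is multi-transitive, then for any m ∈ ℕ and any nonempty open sets U_1,…,U_m, V_1,…,V_m ⊆ X, the set {l ∈ ℕ : f_1^{jl}(U_j) ∩ V_j ≠ ∅ for each 1 ≤ j ≤ m} is infinite. -/
import Mathlib


open Metric Set MeasureTheory

/-- `nacomp f n = f_n ∘ ⋯ ∘ f_1` (and `nacomp f 0 = id`): the time-`n` map of the
non-autonomous system `f_{1,∞}`. -/
def nacomp {X : Type*} (f : ℕ → X → X) : ℕ → X → X
  | 0 => id
  | n + 1 => f (n + 1) ∘ nacomp f n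

/-- `compFrom f i k = f_{i+k-1} ∘ ⋯ ∘ f_i`, i.e. `f_i^k`. -/
def compFrom {X : Type*} (f : ℕ → X → X) (i : ℕ) : ℕ → X → X
  | 0 => id
  | k + 1 => f (i + k) ∘ compFrom f i k

/-- Multi-sensitivity of `f_{1,∞}` with respect to the vector `(v 0, …, v (r-1))`. -/
def multiSensWrt {X : Type*} [MetricSpace X] (f : ℕ → X → X) (r : ℕ) (v : ℕ → ℕ) : Prop :=
  ∃ δ > 0, ∀ U : ℕ → Set X, (∀ i < r, IsOpen (U i) ∧ (U i).Nonempty) →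
    ∃ n ≥ 1, ∀ i < r, ∃ x ∈ U i, ∃ y ∈ U i,
      δ < dist (nacomp f (n * v i) x) (nacomp f (n * v i) y)

/-- Strong multi-sensitivity: multi-sensitivity w.r.t. every vector in `ℕ^r`, every `r`. -/
def strongMultiSens {X : Type*} [MetricSpace X] (f : ℕ → X → X) : Prop :=
  ∀ r ≥ 1, ∀ v : ℕ → ℕ, (∀ i < r, 1 ≤ v i) → multiSensWrt f r v

/-- `𝒩`-sensitivity: multi-sensitivity w.r.t. `(1, 2, …, r)` for every `r`. -/
def nSens {X : Type*} [MetricSpace X] (f : ℕ → X → X) : Prop :=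
  ∀ r ≥ 1, multiSensWrt f r (fun i => i + 1)

/-- Sensitivity of the non-autonomous system. -/
def sens {X : Type*} [MetricSpace X] (f : ℕ → X → X) : Prop :=
  ∃ δ > 0, ∀ U : Set X, IsOpen U → U.Nonempty →
    ∃ n ≥ 1, ∃ x ∈ U, ∃ y ∈ U, δ < dist (nacomp f n x) (nacomp f n y)

/-- Multi-sensitivity of the non-autonomous system. -/
def multiSens {X : Type*} [MetricSpace X] (f : ℕ → X → X) : Prop :=
  ∃ δ > 0, ∀ r : ℕ, ∀ U : ℕ → Set X, (∀ i < r, IsOpen (U i) ∧ (U i).Nonempty) →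
    ∃ n ≥ 1, ∀ i < r, ∃ x ∈ U i, ∃ y ∈ U i, δ < dist (nacomp f n x) (nacomp f n y)

/-- Cofinite sensitivity: for some `δ > 0`, for every nonempty open `U` the set
`N_{f_{1,∞}}(U, δ)` is cofinite in `{1, 2, …}`. -/
def cofSens {X : Type*} [MetricSpace X] (f : ℕ → X → X) : Prop :=
  ∃ δ > 0, ∀ U : Set X, IsOpen U → U.Nonempty →
    {n : ℕ | 1 ≤ n ∧ ¬ ∃ x ∈ U, ∃ y ∈ U, δ < dist (nacomp f n x) (nacomp f n y)}.Finite

/-- Autonomous analogue of `multiSensWrt` for a single map `g`. -/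
def multiSensWrtAuto {X : Type*} [MetricSpace X] (g : X → X) (r : ℕ) (v : ℕ → ℕ) : Prop :=
  ∃ δ > 0, ∀ U : ℕ → Set X, (∀ i < r, IsOpen (U i) ∧ (U i).Nonempty) →
    ∃ n ≥ 1, ∀ i < r, ∃ x ∈ U i, ∃ y ∈ U i,
      δ < dist (g^[n * v i] x) (g^[n * v i] y)

def strongMultiSensAuto {X : Type*} [MetricSpace X] (g : X → X) : Prop :=
  ∀ r ≥ 1, ∀ v : ℕ → ℕ, (∀ i < r, 1 ≤ v i) → multiSensWrtAuto g r v

def nSensAuto {X : Type*} [MetricSpace X] (g : X → X) : Prop :=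
  ∀ r ≥ 1, multiSensWrtAuto g r (fun i => i + 1)

/-- `k`-periodicity of the non-autonomous system: `f_{j+kl} = f_j` for `l ≥ 1`, `1 ≤ j ≤ k`. -/
def kPeriodic {X : Type*} (f : ℕ → X → X) (k : ℕ) : Prop :=
  1 ≤ k ∧ ∀ l ≥ 1, ∀ j, 1 ≤ j → j ≤ k → f (j + k * l) = f j

/-- Multi-transitivity of the non-autonomous system. -/
def multiTrans {X : Type*} [TopologicalSpace X] (f : ℕ → X → X) : Prop :=
  ∀ m ≥ 1, ∀ U V : ℕ → Set X,
    (∀ i < m, IsOpen (U i) ∧ (U i).Nonempty ∧ IsOpen (V i) ∧ (V i).Nonempty) →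
    ∃ k ≥ 1, ∀ i < m, (nacomp f ((i + 1) * k) '' U i ∩ V i).Nonempty

/-- Multi-sensitivity w.r.t. a vector, for an explicit distance function `ρ`
(used for products equipped with the metric `√(d₁² + d₂²)`). -/
def multiSensWrtD {Z : Type*} [TopologicalSpace Z] (ρ : Z → Z → ℝ) (f : ℕ → Z → Z)
    (r : ℕ) (v : ℕ → ℕ) : Prop :=
  ∃ δ > 0, ∀ U : ℕ → Set Z, (∀ i < r, IsOpen (U i) ∧ (U i).Nonempty) →
    ∃ n ≥ 1, ∀ i < r, ∃ x ∈ U i, ∃ y ∈ U i,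
      δ < ρ (nacomp f (n * v i) x) (nacomp f (n * v i) y)

def strongMultiSensD {Z : Type*} [TopologicalSpace Z] (ρ : Z → Z → ℝ) (f : ℕ → Z → Z) : Prop :=
  ∀ r ≥ 1, ∀ v : ℕ → ℕ, (∀ i < r, 1 ≤ v i) → multiSensWrtD ρ f r v

def nSensD {Z : Type*} [TopologicalSpace Z] (ρ : Z → Z → ℝ) (f : ℕ → Z → Z) : Prop :=
  ∀ r ≥ 1, multiSensWrtD ρ f r (fun i => i + 1)

/-- The metric `√(d₁² + d₂²)` on a product of metric spaces. -/
noncomputable def prodDist {X Y : Type*} [MetricSpace X] [MetricSpace Y]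
    (p q : X × Y) : ℝ :=
  Real.sqrt (dist p.1 q.1 ^ 2 + dist p.2 q.2 ^ 2)

/-- `N_{f_{1,∞}^{[v]}}(U, δ)` for an explicit distance function `ρ`. -/
def NsetD {Z : Type*} (ρ : Z → Z → ℝ) (f : ℕ → Z → Z) (v : ℕ) (U : Set Z) (δ : ℝ) : Set ℕ :=
  {n : ℕ | 1 ≤ n ∧ ∃ x ∈ U, ∃ y ∈ U, δ < ρ (nacomp f (n * v) x) (nacomp f (n * v) y)}

/-- `N_{f_{1,∞}^{[v]} × g_{1,∞}^{[v']}}(U × U', δ)` for the product metric `√(d₁² + d₂²)`. -/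
noncomputable def NsetProd {X Y : Type*} [MetricSpace X] [MetricSpace Y]
    (f : ℕ → X → X) (g : ℕ → Y → Y) (v v' : ℕ) (U : Set X) (U' : Set Y) (δ : ℝ) : Set ℕ :=
  {n : ℕ | 1 ≤ n ∧ ∃ p ∈ U ×ˢ U', ∃ q ∈ U ×ˢ U',
    δ < prodDist (nacomp f (n * v) p.1, nacomp g (n * v') p.2)
                 (nacomp f (n * v) q.1, nacomp g (n * v') q.2)}

/-- if `(X, f_{1,∞})` is multi-transitive, then the set of common
transition times `{l : f_1^{jl}(U_j) ∩ V_j ≠ ∅, 1 ≤ j ≤ m}` is infinite. -/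
theorem stmt_17 {X : Type*} [MetricSpace X] [CompactSpace X]
    (hni : ∀ x : X, ¬ IsOpen ({x} : Set X))
    (f : ℕ → X → X) (hf : ∀ n, Continuous (f n)) (ht : multiTrans f) :
    ∀ m ≥ 1, ∀ U V : ℕ → Set X,
      (∀ i < m, IsOpen (U i) ∧ (U i).Nonempty ∧ IsOpen (V i) ∧ (V i).Nonempty) →
      {l : ℕ | 1 ≤ l ∧ ∀ i < m,
        (nacomp f ((i + 1) * l) '' U i ∩ V i).Nonempty}.Infinite := by
  intro m hm U V hUV
  apply Set.infinite_of_forall_exists_gt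
  intro N
  set M := N + 1 with hM
  set U' : ℕ → Set X := fun j => if (j + 1) % M = 0 then U ((j + 1) / M - 1) else Set.univ
    with hU'
  set V' : ℕ → Set X := fun j => if (j + 1) % M = 0 then V ((j + 1) / M - 1) else Set.univ
    with hV'
  have hXne : Nonempty X := ⟨(hUV 0 hm).2.1.some⟩
  have hMpos : 0 < M := Nat.succ_pos N
  have hhyp : ∀ j < m * M, IsOpen (U' j) ∧ (U' j).Nonempty ∧ IsOpen (V' j) ∧ (V' j).Nonempty := by
    intro j hj
    by_cases h : (j + 1) % M = 0
    · obtain ⟨q, hq⟩ := Nat.dvd_of_mod_eq_zero h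
      have hq1 : 1 ≤ q := by
        rcases Nat.eq_zero_or_pos q with h0 | h
        · subst h0; simp at hq
        · exact h
      have hqm : q ≤ m := by
        by_contra hc
        push_neg at hc
        have : m * M < M * q := by
          calc m * M = M * m := by ring
            _ < M * q := (Nat.mul_lt_mul_left hMpos).mpr hc
        omega
      have hlt : q - 1 < m := by omega
      have hdq : (j + 1) / M = q := by rw [hq]; exact Nat.mul_div_cancel_left q hMpos
      obtain ⟨hUo, hUne, hVo, hVne⟩ := hUV (q - 1) hlt
      simp only [hU', hV', h, hdq, if_true]
      exact ⟨hUo, hUne, hVo, hVne⟩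
    · simp only [hU', hV', h, if_neg, if_false]
      exact ⟨isOpen_univ, Set.univ_nonempty, isOpen_univ, Set.univ_nonempty⟩
  obtain ⟨k, hk1, hk⟩ := ht (m * M) (by nlinarith) U' V' hhyp
  refine ⟨M * k, ⟨?_, ?_⟩, ?_⟩
  · exact Nat.one_le_iff_ne_zero.mpr (by positivity)
  · intro i hi
    have h2 : 0 < (i + 1) * M := Nat.mul_pos (Nat.succ_pos i) hMpos
    have hj : (i + 1) * M - 1 < m * M := by
      have h1 : (i + 1) * M ≤ m * M := Nat.mul_le_mul_right M hi
      omega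
    have := hk ((i + 1) * M - 1) hj
    have hjj : (i + 1) * M - 1 + 1 = (i + 1) * M := by omega
    rw [hjj] at this
    have hmod : (i + 1) * M % M = 0 := Nat.mul_mod_left (i+1) M
    have hdiv : (i + 1) * M / M = i + 1 := Nat.mul_div_cancel _ hMpos
    simp only [hU', hV', hjj, hmod, hdiv, if_true] at this
    have harith : (i + 1) * M * k = (i + 1) * (M * k) := by ring
    rw [harith] at this
    simpa using this
  · have h3 : M ≤ M * k := Nat.le_mul_of_pos_right M hk1
    omega
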